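/- In the one-dimensional example X₁ = Y₁ ∪ H, every surjective isometry of (X₁, d) is the restriction to X₁ of one of the following maps, for some a ∈ ℝ: either y ↦ g(a) + y on Y₁ and (g(t), t) ↦ (g(t + a), t + a) on H, where g(a) ∈ Y₁; or y ↦ g(2a) − y on Y₁ and (g(t), t) ↦ (g(2a − t), 2a − t) on H, where g(2a) ∈ Y₁. Conversely, each such map is a surjective isometry of X₁. -/

import Mathlib

/-- The distance of the Z-construction on the disjoint union `Y ⊕ (Y × ℝ)`. -/
noncomputable def zdist {Y : Type*} [MetricSpace Y] (R M : ℝ) :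
    Y ⊕ Y × ℝ → Y ⊕ Y × ℝ → ℝ
  | Sum.inl y₁, Sum.inl y₂ => dist y₁ y₂
  | Sum.inl y₁, Sum.inr q => dist y₁ q.1 + R
  | Sum.inr p, Sum.inl y₂ => dist p.1 y₂ + R
  | Sum.inr p, Sum.inr q => dist p.1 q.1 + min |p.2 - q.2| M

/-- The 2-torus `𝕋 = AddCircle 1 × AddCircle 1` with the product (max) metric. -/
abbrev T2 : Type := AddCircle (1 : ℝ) × AddCircle (1 : ℝ)

/-- The dense one-parameter subgroup `g(t) = (t mod 1, αt mod 1)` of the torus. -/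
noncomputable def torusFlow (α : ℝ) (t : ℝ) : T2 :=
  ((t : AddCircle (1 : ℝ)), ((α * t : ℝ) : AddCircle (1 : ℝ)))

/-- The space `X = 𝕋 ∪ H` where `H = {(g(t), t) : t ∈ ℝ}`, as a subset of
`Z = 𝕋 ⊕ (𝕋 × ℝ)`. -/
def torusX (α : ℝ) : Set (T2 ⊕ T2 × ℝ) :=
  {z | ∃ y : T2, z = Sum.inl y} ∪ {z | ∃ t : ℝ, z = Sum.inr (torusFlow α t, t)}

theorem memT (α : ℝ) (y : T2) : (Sum.inl y : T2 ⊕ T2 × ℝ) ∈ torusX α :=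
  Or.inl ⟨y, rfl⟩

theorem memH (α : ℝ) (t : ℝ) :
    (Sum.inr (torusFlow α t, t) : T2 ⊕ T2 × ℝ) ∈ torusX α :=
  Or.inr ⟨t, rfl⟩

/-- The one-dimensional example `X₁ = Y₁ ∪ H`, where `Y₁ = AddCircle 1 × {0}` is
the one-dimensional subtorus of `𝕋` containing the identity, as a subset of
`Z = 𝕋 ⊕ (𝕋 × ℝ)`. -/
def torusX1 (α : ℝ) : Set (T2 ⊕ T2 × ℝ) :=
  {z | ∃ y : T2, y.2 = 0 ∧ z = Sum.inl y} ∪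
    {z | ∃ t : ℝ, z = Sum.inr (torusFlow α t, t)}

theorem memT1 (α : ℝ) (y : T2) (hy : y.2 = 0) :
    (Sum.inl y : T2 ⊕ T2 × ℝ) ∈ torusX1 α :=
  Or.inl ⟨y, hy, rfl⟩

theorem memH1 (α : ℝ) (t : ℝ) :
    (Sum.inr (torusFlow α t, t) : T2 ⊕ T2 × ℝ) ∈ torusX1 α :=
  Or.inr ⟨t, rfl⟩

/-! ### Auxiliary lemmas -/

lemma AC_norm_le_half (x : AddCircle (1:ℝ)) : ‖x‖ ≤ 1/2 := by
  simpa using AddCircle.norm_le_half_period (1:ℝ) one_ne_zero (x := x)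

lemma AC_norm_coe_eq (x : ℝ) (h : |x| ≤ 1/2) : ‖(x : AddCircle (1:ℝ))‖ = |x| := by
  rw [AddCircle.norm_coe_eq_abs_iff (1:ℝ) one_ne_zero]; simpa using h

lemma AC_norm_coe_le (x : ℝ) : ‖(x : AddCircle (1:ℝ))‖ ≤ |x| := by
  rcases le_or_gt |x| (1/2) with h | h
  · exact (AC_norm_coe_eq x h).le
  · exact (AC_norm_le_half _).trans h.le

lemma AC_coe_int (n : ℤ) : ((n : ℝ) : AddCircle (1:ℝ)) = 0 := by
  rw [QuotientAddGroup.eq_zero_iff]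
  exact AddSubgroup.mem_zmultiples_iff.2 ⟨n, by simp⟩

lemma T2_dist_le_half (z w : T2) : dist z w ≤ 1/2 := by
  rw [Prod.dist_eq]
  refine max_le ?_ ?_ <;> rw [dist_eq_norm] <;> exact AC_norm_le_half _

lemma torusFlow_add (α t s : ℝ) : torusFlow α (t+s) = torusFlow α t + torusFlow α s := by
  simp [torusFlow, Prod.ext_iff, mul_add]

lemma torusFlow_sub (α t s : ℝ) : torusFlow α (t-s) = torusFlow α t - torusFlow α s := by
  simp [torusFlow, Prod.ext_iff, mul_sub]

lemma dist_torusFlow (α t s : ℝ) : dist (torusFlow α t) (torusFlow α s)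
    = max ‖((t - s : ℝ) : AddCircle (1:ℝ))‖ ‖((α*(t-s) : ℝ) : AddCircle (1:ℝ))‖ := by
  have h1 : dist (torusFlow α t).1 (torusFlow α s).1 = ‖((t-s:ℝ) : AddCircle (1:ℝ))‖ := by
    rw [dist_eq_norm, AddCircle.coe_sub]; rfl
  have h2 : dist (torusFlow α t).2 (torusFlow α s).2 = ‖((α*(t-s):ℝ) : AddCircle (1:ℝ))‖ := by
    rw [dist_eq_norm, mul_sub, AddCircle.coe_sub]; rfl
  rw [Prod.dist_eq, h1, h2]

lemma dist_torusFlow_le (α t s : ℝ) :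
    dist (torusFlow α t) (torusFlow α s) ≤ (max 1 |α|) * |t - s| := by
  rw [dist_torusFlow]
  refine max_le ?_ ?_
  · exact (AC_norm_coe_le _).trans (by nlinarith [abs_nonneg (t-s), le_max_left 1 |α|])
  · refine (AC_norm_coe_le _).trans ?_
    rw [abs_mul]
    nlinarith [abs_nonneg (t-s), abs_nonneg α, le_max_right 1 |α|]

def lineSub (α : ℝ) : AddSubgroup ℝ where
  carrier := {x | ∃ m n : ℤ, x = m + n * α}
  zero_mem' := ⟨0, 0, by simp⟩
  add_mem' := by
    rintro a b ⟨m, n, rfl⟩ ⟨m', n', rfl⟩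
    exact ⟨m + m', n + n', by push_cast; ring⟩
  neg_mem' := by
    rintro a ⟨m, n, rfl⟩
    exact ⟨-m, -n, by push_cast; ring⟩

lemma lineSub_dense {α : ℝ} (hα : Irrational α) : Dense (lineSub α : Set ℝ) := by
  rcases (lineSub α).dense_or_cyclic with h | ⟨a, ha⟩
  · exact h
  · exfalso
    have h1 : (1:ℝ) ∈ lineSub α := ⟨1, 0, by simp⟩
    have h2 : α ∈ lineSub α := ⟨0, 1, by simp⟩
    rw [ha, AddSubgroup.mem_closure_singleton] at h1 h2
    obtain ⟨p, hp⟩ := h1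
    obtain ⟨q, hq⟩ := h2
    rw [zsmul_eq_mul] at hp hq
    have hp0 : (p : ℝ) ≠ 0 := by
      rintro h
      rw [h, zero_mul] at hp
      exact one_ne_zero hp.symm
    have ha' : a = (p:ℝ)⁻¹ := eq_inv_of_mul_eq_one_left (by rw [mul_comm]; exact hp)
    refine hα ⟨(q : ℚ) / (p : ℚ), ?_⟩
    push_cast
    rw [← hq, ha', div_eq_mul_inv]

lemma torusFlow_dense {α : ℝ} (hα : Irrational α) (z : T2)
    {ε : ℝ} (hε : 0 < ε) : ∃ t : ℝ, dist (torusFlow α t) z < ε := by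
  obtain ⟨u, hu⟩ := Quotient.exists_rep z.1
  obtain ⟨v, hv⟩ := Quotient.exists_rep z.2
  have hu : (u : AddCircle (1:ℝ)) = z.1 := hu
  have hv : (v : AddCircle (1:ℝ)) = z.2 := hv
  have hd := lineSub_dense hα
  rw [Metric.dense_iff] at hd
  obtain ⟨x, hx1, hx2⟩ := hd (v - α * u) ε hε
  obtain ⟨m, n, rfl⟩ := hx2
  refine ⟨u + n, ?_⟩
  have e1 : dist (torusFlow α (u + n)).1 z.1 = 0 := by
    rw [dist_eq_zero, ← hu]
    show ((u + n : ℝ) : AddCircle (1:ℝ)) = u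
    rw [AddCircle.coe_add, AC_coe_int, add_zero]
  have e2 : dist (torusFlow α (u + n)).2 z.2 < ε := by
    rw [← hv, dist_eq_norm]
    have : (torusFlow α (u+n)).2 - ((v:ℝ) : AddCircle (1:ℝ))
        = ((α*(u+n) - v + m : ℝ) : AddCircle (1:ℝ)) := by
      rw [AddCircle.coe_add, AC_coe_int, add_zero, AddCircle.coe_sub]
      rfl
    rw [this]
    refine (AC_norm_coe_le _).trans_lt ?_
    rw [Metric.mem_ball, Real.dist_eq] at hx1
    calc |α*(u+n) - v + m| = |(m + n*α) - (v - α*u)| := by ring_nf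
    _ < ε := hx1
  rw [Prod.dist_eq]
  exact max_lt (by rw [e1]; exact hε) e2

lemma torusFlow_unique {α : ℝ} (hα : Irrational α) (w y : T2)
    (h : ∀ t : ℝ, dist w (torusFlow α t) = dist y (torusFlow α t)) : w = y := by
  rw [← dist_le_zero]
  by_contra hc
  push_neg at hc
  obtain ⟨t, ht⟩ := torusFlow_dense hα y (half_pos hc)
  have h1 := dist_triangle w (torusFlow α t) y
  have h2 := h t
  have h3 : dist (torusFlow α t) y = dist y (torusFlow α t) := dist_comm _ _
  linarith

lemma lipschitz_of_local (f : ℝ → ℝ) {δ : ℝ} (hδ : 0 < δ)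
    (h : ∀ t s : ℝ, |t - s| ≤ δ → |f t - f s| = |t - s|) (t s : ℝ) :
    |f t - f s| ≤ |t - s| := by
  obtain ⟨n, hn⟩ := exists_nat_ge (|s - t| / δ)
  set N : ℕ := n + 1 with hN
  have hN0 : (0:ℝ) < N := by positivity
  have h1 : |s - t| / δ ≤ (N:ℝ) := by push_cast [hN]; linarith
  have hstep : |s - t| / N ≤ δ := by
    rw [div_le_iff₀ hN0, mul_comm]
    exact (div_le_iff₀ hδ).mp h1
  have key : ∀ k : ℕ, |f (t + (k:ℝ)*(s-t)/N) - f t| ≤ (k:ℝ) * (|s-t|/N) := by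
    intro k
    induction k with
    | zero => simp
    | succ k ih =>
      rw [Nat.cast_succ]
      have e0 : |(t + ((k:ℕ)+1:ℝ)*(s-t)/N) - (t + (k:ℝ)*(s-t)/N)| = |s-t|/N := by
        rw [show (t + ((k:ℕ)+1:ℝ)*(s-t)/N) - (t + (k:ℝ)*(s-t)/N) = (s-t)/N by ring]
        rw [abs_div, abs_of_pos hN0]
      have e1 : |f (t + ((k:ℕ)+1:ℝ)*(s-t)/N) - f (t + (k:ℝ)*(s-t)/N)| = |s-t|/N := by
        rw [h _ _ (by rw [e0]; exact hstep)]
        exact e0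
      calc |f (t + ((k:ℕ)+1:ℝ)*(s-t)/N) - f t|
          ≤ |f (t + ((k:ℕ)+1:ℝ)*(s-t)/N) - f (t + (k:ℝ)*(s-t)/N)|
            + |f (t + (k:ℝ)*(s-t)/N) - f t| := abs_sub_le _ _ _
        _ ≤ |s-t|/N + k * (|s-t|/N) := by rw [e1]; linarith
        _ = (((k:ℕ):ℝ)+1) * (|s-t|/N) := by push_cast; ring
  have hfin := key N
  rw [show t + (N:ℝ)*(s-t)/N = s by field_simp; ring] at hfin
  rw [show (N:ℝ) * (|s-t|/N) = |s-t| by field_simp] at hfin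
  rw [abs_sub_comm t s, abs_sub_comm (f t) (f s)]
  exact hfin

lemma real_isometry (f : ℝ → ℝ) (h : ∀ t s : ℝ, |f t - f s| = |t - s|) :
    (∀ t, f t = t + f 0) ∨ (∀ t, f t = f 0 - t) := by
  have key : ∀ t s : ℝ, (f t - f 0) * (f s - f 0) = t * s := by
    intro t s
    have h1 : (f t - f s)^2 = (t - s)^2 := by rw [← sq_abs, h, sq_abs]
    have h2 : (f t - f 0)^2 = t^2 := by
      rw [← sq_abs, h, sub_zero, sq_abs]
    have h3 : (f s - f 0)^2 = s^2 := by
      rw [← sq_abs, h, sub_zero, sq_abs]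
    nlinarith [h1, h2, h3]
  have e1 : |f 1 - f 0| = 1 := by rw [h 1 0]; norm_num
  rcases abs_eq (by norm_num : (0:ℝ) ≤ 1) |>.mp e1 with h1 | h1
  · left; intro t
    have := key t 1
    rw [h1, mul_one, mul_one] at this
    linarith
  · right; intro t
    have := key t 1
    rw [h1] at this
    linarith

lemma exists_nat_div_lt {x c : ℝ} (hx : 0 ≤ x) (hc : 0 < c) :
    ∃ N : ℕ, 0 < N ∧ x / N < c := by
  obtain ⟨n, hn⟩ := exists_nat_gt (x / c)
  refine ⟨n + 1, Nat.succ_pos n, ?_⟩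
  have hN : (0:ℝ) < ((n+1 : ℕ):ℝ) := by positivity
  rw [div_lt_iff₀ hN]
  have h2 : x/c < ((n+1:ℕ):ℝ) := hn.trans_le (by push_cast; linarith)
  calc x = (x/c)*c := by field_simp
  _ < ((n+1:ℕ):ℝ)*c := by nlinarith
  _ = c*((n+1:ℕ):ℝ) := mul_comm _ _

lemma dH_eq_small (α : ℝ) {M : ℝ} (hM : 0 < M) {t s : ℝ}
    (h : |t - s| ≤ min (1/(2*(1+|α|))) M) :
    dist (torusFlow α t) (torusFlow α s) + min |t-s| M = (1 + max 1 |α|) * |t-s| := by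
  have hα1 : (0:ℝ) < 1 + |α| := by positivity
  have h1 : |t-s| ≤ 1/2 := by
    refine (h.trans (min_le_left _ _)).trans ?_
    rw [div_le_div_iff₀ (by positivity) (by norm_num)]
    nlinarith [abs_nonneg α]
  have h2 : |α*(t-s)| ≤ 1/2 := by
    rw [abs_mul]
    have := h.trans (min_le_left _ _)
    calc |α| * |t-s| ≤ |α| * (1/(2*(1+|α|))) := by
          exact mul_le_mul_of_nonneg_left this (abs_nonneg α)
    _ ≤ 1/2 := by
          rw [mul_one_div, div_le_div_iff₀ (by positivity) (by norm_num)]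
          nlinarith [abs_nonneg α]
  rw [dist_torusFlow, AC_norm_coe_eq _ h1, AC_norm_coe_eq _ h2,
    min_eq_left (h.trans (min_le_right _ _)), abs_mul]
  rw [show max |t-s| (|α| * |t-s|) = max 1 |α| * |t-s| from by
    rw [max_mul_of_nonneg _ _ (abs_nonneg (t-s)), one_mul]]
  ring

lemma dH_lower {α M : ℝ} (hM : 0 < M) {t s : ℝ}
    (h : dist (torusFlow α t) (torusFlow α s) + min |t-s| M < M) :
    |t - s| ≤ dist (torusFlow α t) (torusFlow α s) + min |t-s| M := by
  have hd0 : (0:ℝ) ≤ dist (torusFlow α t) (torusFlow α s) := dist_nonneg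
  rcases le_or_gt |t-s| M with h1 | h1
  · rw [min_eq_left h1]
    linarith
  · exfalso
    rw [min_eq_right h1.le] at h
    linarith

lemma local_of_pres (α : ℝ) {M : ℝ} (hM : 0 < M) (f : ℝ → ℝ)
    (hf : ∀ t s : ℝ, dist (torusFlow α (f t)) (torusFlow α (f s)) + min |f t - f s| M
      = dist (torusFlow α t) (torusFlow α s) + min |t - s| M)
    {t s : ℝ} (h : |t - s| * (2*(1 + max 1 |α|)) ≤ min (1/(2*(1+|α|))) M) :
    |f t - f s| = |t - s| := by
  have hc2 : (2:ℝ) ≤ 1 + max 1 |α| := by have := le_max_left 1 |α|; linarith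
  have habs : (0:ℝ) ≤ |t-s| := abs_nonneg _
  have hKM : min (1/(2*(1+|α|))) M ≤ M := min_le_right _ _
  have hδK : |t - s| ≤ min (1/(2*(1+|α|))) M := le_trans (by nlinarith) h
  have e1 := dH_eq_small α hM hδK
  have e2 : (1 + max 1 |α|) * |t-s| < M := by nlinarith
  have hd0 : (0:ℝ) ≤ dist (torusFlow α t) (torusFlow α s) := dist_nonneg
  have h5 : |f t - f s| ≤ (1 + max 1 |α|) * |t-s| := by
    have h6 := dH_lower hM (t := f t) (s := f s) (by rw [hf, e1]; exact e2)
    rw [hf, e1] at h6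
    exact h6
  have e3 : |f t - f s| ≤ min (1/(2*(1+|α|))) M := by nlinarith
  have e4 := dH_eq_small α hM e3
  have e5 : (1 + max 1 |α|) * |f t - f s| = (1 + max 1 |α|) * |t - s| := by
    rw [← e4, hf, e1]
  exact mul_left_cancel₀ (by positivity) e5
lemma torusFlow_zero (α : ℝ) : torusFlow α 0 = 0 := by
  simp [torusFlow, Prod.ext_iff]

lemma torusFlow_neg (α t : ℝ) : torusFlow α (-t) = - torusFlow α t := by
  have := torusFlow_sub α 0 t
  simpa [torusFlow_zero] using this

lemma zdist_self {Y : Type*} [MetricSpace Y] {R M : ℝ} (hM : 0 ≤ M) (z : Y ⊕ Y × ℝ) :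
    zdist R M z z = 0 := by
  cases z with
  | inl y => show dist y y = 0; simp
  | inr p => show dist p.1 p.1 + min |p.2 - p.2| M = 0; simp [hM]

noncomputable def transMap (α a : ℝ) : T2 ⊕ T2 × ℝ → T2 ⊕ T2 × ℝ
  | Sum.inl y => Sum.inl (torusFlow α a + y)
  | Sum.inr p => Sum.inr (p.1 + torusFlow α a, p.2 + a)

lemma transMap_zdist (α R M a : ℝ) (z w : T2 ⊕ T2 × ℝ) :
    zdist R M (transMap α a z) (transMap α a w) = zdist R M z w := by
  cases z with
  | inl y =>
    cases w with
    | inl y' =>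
      show dist (torusFlow α a + y) (torusFlow α a + y') = dist y y'
      rw [dist_add_left]
    | inr p =>
      show dist (torusFlow α a + y) (p.1 + torusFlow α a) + R = dist y p.1 + R
      rw [add_comm p.1, dist_add_left]
  | inr p =>
    cases w with
    | inl y' =>
      show dist (p.1 + torusFlow α a) (torusFlow α a + y') + R = dist p.1 y' + R
      rw [add_comm p.1, dist_add_left]
    | inr q =>
      show dist (p.1 + torusFlow α a) (q.1 + torusFlow α a) + min |p.2 + a - (q.2 + a)| M
        = dist p.1 q.1 + min |p.2 - q.2| M
      rw [dist_add_right, show p.2 + a - (q.2 + a) = p.2 - q.2 by ring]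

lemma transMap_mem (α a : ℝ) (ha : (torusFlow α a).2 = 0) {z : T2 ⊕ T2 × ℝ}
    (hz : z ∈ torusX1 α) : transMap α a z ∈ torusX1 α := by
  rcases hz with ⟨y, hy, rfl⟩ | ⟨t, rfl⟩
  · exact memT1 α _ (by show (torusFlow α a).2 + y.2 = 0; rw [ha, hy, add_zero])
  · have e : transMap α a (Sum.inr (torusFlow α t, t)) = Sum.inr (torusFlow α (t+a), t+a) := by
      show Sum.inr (torusFlow α t + torusFlow α a, t + a) = _
      rw [← torusFlow_add]
    rw [e]
    exact memH1 α (t+a)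

lemma transMap_inv (α a : ℝ) (z : T2 ⊕ T2 × ℝ) : transMap α a (transMap α (-a) z) = z := by
  cases z with
  | inl y =>
    show Sum.inl (torusFlow α a + (torusFlow α (-a) + y)) = Sum.inl y
    rw [← add_assoc, ← torusFlow_add, show a + -a = 0 by ring, torusFlow_zero, zero_add]
  | inr p =>
    show Sum.inr (p.1 + torusFlow α (-a) + torusFlow α a, p.2 + -a + a) = Sum.inr p
    rw [add_assoc, ← torusFlow_add, show -a + a = 0 by ring, torusFlow_zero, add_zero]
    rw [show p.2 + -a + a = p.2 by ring]

noncomputable def reflMap (α b : ℝ) : T2 ⊕ T2 × ℝ → T2 ⊕ T2 × ℝ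
  | Sum.inl y => Sum.inl (torusFlow α b - y)
  | Sum.inr p => Sum.inr (torusFlow α b - p.1, b - p.2)

lemma reflMap_zdist (α R M b : ℝ) (z w : T2 ⊕ T2 × ℝ) :
    zdist R M (reflMap α b z) (reflMap α b w) = zdist R M z w := by
  cases z with
  | inl y =>
    cases w with
    | inl y' =>
      show dist (torusFlow α b - y) (torusFlow α b - y') = dist y y'
      rw [dist_sub_left]
    | inr p =>
      show dist (torusFlow α b - y) (torusFlow α b - p.1) + R = dist y p.1 + R
      rw [dist_sub_left]
  | inr p =>
    cases w with
    | inl y' =>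
      show dist (torusFlow α b - p.1) (torusFlow α b - y') + R = dist p.1 y' + R
      rw [dist_sub_left]
    | inr q =>
      show dist (torusFlow α b - p.1) (torusFlow α b - q.1) + min |b - p.2 - (b - q.2)| M
        = dist p.1 q.1 + min |p.2 - q.2| M
      rw [dist_sub_left, show b - p.2 - (b - q.2) = -(p.2 - q.2) by ring, abs_neg]

lemma reflMap_mem (α b : ℝ) (hb : (torusFlow α b).2 = 0) {z : T2 ⊕ T2 × ℝ}
    (hz : z ∈ torusX1 α) : reflMap α b z ∈ torusX1 α := by
  rcases hz with ⟨y, hy, rfl⟩ | ⟨t, rfl⟩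
  · exact memT1 α _ (by show (torusFlow α b).2 - y.2 = 0; rw [hb, hy, sub_zero])
  · have e : reflMap α b (Sum.inr (torusFlow α t, t)) = Sum.inr (torusFlow α (b-t), b-t) := by
      show Sum.inr (torusFlow α b - torusFlow α t, b - t) = _
      rw [← torusFlow_sub]
    rw [e]
    exact memH1 α (b-t)

lemma reflMap_inv (α b : ℝ) (z : T2 ⊕ T2 × ℝ) : reflMap α b (reflMap α b z) = z := by
  cases z with
  | inl y =>
    show Sum.inl (torusFlow α b - (torusFlow α b - y)) = Sum.inl y
    rw [sub_sub_cancel]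
  | inr p =>
    show Sum.inr (torusFlow α b - (torusFlow α b - p.1), b - (b - p.2)) = Sum.inr p
    rw [sub_sub_cancel, sub_sub_cancel]
theorem torusX1_forward (α : ℝ) (hα : Irrational α) (R M : ℝ) (hM : 0 < M) (hRM : M ≤ 2 * R)
    (φ : torusX1 α → torusX1 α) (hsurj : Function.Surjective φ)
    (hiso : ∀ p q : torusX1 α, zdist R M (φ p).1 (φ q).1 = zdist R M p.1 q.1) :
    ∃ a : ℝ,
      ((torusFlow α a).2 = 0 ∧
        (∀ (y : T2) (hy : y.2 = 0),
          (φ ⟨Sum.inl y, memT1 α y hy⟩).1 = Sum.inl (torusFlow α a + y)) ∧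
        (∀ t : ℝ, (φ ⟨Sum.inr (torusFlow α t, t), memH1 α t⟩).1 =
            Sum.inr (torusFlow α (t + a), t + a))) ∨
      ((torusFlow α (2 * a)).2 = 0 ∧
        (∀ (y : T2) (hy : y.2 = 0),
          (φ ⟨Sum.inl y, memT1 α y hy⟩).1 = Sum.inl (torusFlow α (2 * a) - y)) ∧
        (∀ t : ℝ, (φ ⟨Sum.inr (torusFlow α t, t), memH1 α t⟩).1 =
            Sum.inr (torusFlow α (2 * a - t), 2 * a - t))) := by
  classical
  have hR : 0 < R := by linarith
  let Yp : ∀ (y : T2), y.2 = 0 → torusX1 α := fun y hy => ⟨Sum.inl y, memT1 α y hy⟩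
  let FY : ℝ → torusX1 α := fun u => ⟨Sum.inl (((u : AddCircle (1:ℝ)), 0) : T2), memT1 α _ rfl⟩
  let FH : ℝ → torusX1 α := fun t => ⟨Sum.inr (torusFlow α t, t), memH1 α t⟩
  have sides : ∀ p q : torusX1 α, zdist R M p.1 q.1 < R →
      ((∃ y : T2, p.1 = Sum.inl y) ↔ (∃ y : T2, q.1 = Sum.inl y)) := by
    intro p q h
    rcases p.2 with ⟨y, hy, hp⟩ | ⟨t, hp⟩ <;> rcases q.2 with ⟨y', hy', hq⟩ | ⟨s, hq⟩
    · exact iff_of_true ⟨y, hp⟩ ⟨y', hq⟩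
    · exfalso
      rw [hp, hq] at h
      have h1 : dist y (torusFlow α s, s).1 + R < R := h
      have h0 : (0:ℝ) ≤ dist y (torusFlow α s, s).1 := dist_nonneg
      linarith
    · exfalso
      rw [hp, hq] at h
      have h1 : dist (torusFlow α t, t).1 y' + R < R := h
      have h0 : (0:ℝ) ≤ dist (torusFlow α t, t).1 y' := dist_nonneg
      linarith
    · constructor
      · rintro ⟨y0, h0⟩
        rw [hp] at h0
        simp at h0
      · rintro ⟨y0, h0⟩
        rw [hq] at h0
        simp at h0
  have stepφ : ∀ p q : torusX1 α, zdist R M p.1 q.1 < R →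
      ((∃ y : T2, (φ p).1 = Sum.inl y) ↔ (∃ y : T2, (φ q).1 = Sum.inl y)) :=
    fun p q h => sides (φ p) (φ q) (by rw [hiso p q]; exact h)
  have chain : ∀ (F : ℝ → torusX1 α) (C : ℝ), 0 ≤ C →
      (∀ u c : ℝ, zdist R M (F u).1 (F (u+c)).1 ≤ C * |c|) → ∀ u u' : ℝ,
      ((∃ y : T2, (φ (F u)).1 = Sum.inl y) ↔ (∃ y : T2, (φ (F u')).1 = Sum.inl y)) := by
    intro F C hC hstep u u'
    obtain ⟨N, hN1, hN2⟩ := exists_nat_div_lt (mul_nonneg hC (abs_nonneg (u'-u))) hR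
    have hN0 : (0:ℝ) < N := by exact_mod_cast hN1
    have key : ∀ k : ℕ, ((∃ y:T2, (φ (F u)).1 = Sum.inl y)
        ↔ (∃ y:T2, (φ (F (u + (k:ℝ)*(u'-u)/N))).1 = Sum.inl y)) := by
      intro k
      induction k with
      | zero => simp
      | succ k ih =>
        refine ih.trans ?_
        have e : u + ((k+1:ℕ):ℝ)*(u'-u)/N = (u + (k:ℝ)*(u'-u)/N) + (u'-u)/N := by
          push_cast; ring
        rw [e]
        refine stepφ _ _ (lt_of_le_of_lt (hstep _ _) ?_)
        rw [abs_div, abs_of_pos hN0]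
        calc C * (|u'-u|/N) = C*|u'-u|/N := by ring
        _ < R := hN2
    have hfin := key N
    rw [show u + (N:ℝ)*(u'-u)/N = u' by field_simp; ring] at hfin
    exact hfin
  have Ycoh : ∀ u u' : ℝ, ((∃ y:T2,(φ (FY u)).1 = Sum.inl y)
      ↔ (∃ y:T2,(φ (FY u')).1 = Sum.inl y)) := by
    refine chain FY 1 one_pos.le ?_
    intro u c
    show dist (((u : AddCircle (1:ℝ)), 0) : T2) ((((u+c : ℝ) : AddCircle (1:ℝ)), 0) : T2) ≤ 1*|c|
    rw [Prod.dist_eq, one_mul]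
    refine max_le ?_ ?_
    · rw [dist_eq_norm, ← AddCircle.coe_sub]
      refine (AC_norm_coe_le _).trans ?_
      rw [show u - (u+c) = -c by ring, abs_neg]
    · rw [dist_self]
      exact abs_nonneg c
  have Hcoh : ∀ t t' : ℝ, ((∃ y:T2,(φ (FH t)).1 = Sum.inl y)
      ↔ (∃ y:T2,(φ (FH t')).1 = Sum.inl y)) := by
    refine chain FH (max 1 |α| + 1) (by positivity) ?_
    intro t c
    show dist (torusFlow α t) (torusFlow α (t+c)) + min |t - (t+c)| M ≤ (max 1 |α| + 1)*|c|
    have h1 := dist_torusFlow_le α t (t+c)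
    rw [show t - (t+c) = -c by ring] at h1 ⊢
    rw [abs_neg] at h1
    have h2 : min |(-c)| M ≤ |c| := by rw [abs_neg]; exact min_le_left _ _
    calc dist (torusFlow α t) (torusFlow α (t+c)) + min |(-c)| M ≤ max 1 |α| * |c| + |c| :=
      add_le_add h1 h2
    _ = (max 1 |α| + 1)*|c| := by ring
  -- every Y point maps to the left side
  have hY0 : ∃ y:T2, (φ (FY 0)).1 = Sum.inl y := by
    by_contra hb
    have hAllY : ∀ u, ¬ ∃ y:T2, (φ (FY u)).1 = Sum.inl y := fun u h => hb ((Ycoh u 0).mp h)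
    obtain ⟨z, hz⟩ := hsurj (FY 0)
    have hzL : ∃ y:T2, (φ z).1 = Sum.inl y := ⟨(((0:ℝ) : AddCircle (1:ℝ)), 0), by rw [hz]⟩
    rcases z.2 with ⟨y, hy, hzy⟩ | ⟨t, hzt⟩
    · obtain ⟨u, hu⟩ := Quotient.exists_rep y.1
      have hu' : (u : AddCircle (1:ℝ)) = y.1 := hu
      have hzz : z = FY u := Subtype.ext (by
        rw [hzy]
        exact congrArg Sum.inl (Prod.ext_iff.mpr ⟨hu'.symm, hy⟩))
      exact hAllY u (hzz ▸ hzL)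
    · have hzz : z = FH t := Subtype.ext hzt
      have hHL : ∀ s, ∃ y:T2, (φ (FH s)).1 = Sum.inl y := fun s => (Hcoh t s).mp (hzz ▸ hzL)
      obtain ⟨w, hw⟩ := hHL 0
      obtain ⟨w', hw'⟩ := hHL (1/2 + (⌈M⌉₊ : ℝ))
      have hMt : M ≤ |(0:ℝ) - (1/2 + (⌈M⌉₊ : ℝ))| := by
        have h1 := Nat.le_ceil M
        rw [show (0:ℝ) - (1/2 + (⌈M⌉₊ : ℝ)) = -(1/2 + (⌈M⌉₊ : ℝ)) by ring, abs_neg,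
          abs_of_pos (by positivity)]
        linarith
      have hdist : 1/2 ≤ dist (torusFlow α 0) (torusFlow α (1/2 + (⌈M⌉₊ : ℝ))) := by
        rw [dist_torusFlow]
        refine le_trans ?_ (le_max_left _ _)
        have e : ((0 - (1/2 + (⌈M⌉₊ : ℝ)) : ℝ) : AddCircle (1:ℝ))
            = ((-(1/2) : ℝ) : AddCircle (1:ℝ)) := by
          rw [show (0:ℝ) - (1/2 + (⌈M⌉₊ : ℝ)) = -(1/2) - (⌈M⌉₊:ℝ) by ring, AddCircle.coe_sub,
            show (((⌈M⌉₊:ℕ):ℝ) : AddCircle (1:ℝ)) = 0 from by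
              have := AC_coe_int (⌈M⌉₊ : ℤ)
              push_cast at this ⊢
              exact this,
            sub_zero]
        have habs : |(1:ℝ)/2| = 1/2 := abs_of_pos (by norm_num)
        rw [e, AddCircle.coe_neg, norm_neg, AC_norm_coe_eq _ (by rw [habs]), habs]
      have hfar : 1/2 + M ≤ zdist R M (FH 0).1 (FH (1/2 + (⌈M⌉₊ : ℝ))).1 := by
        show 1/2 + M ≤ dist (torusFlow α 0) (torusFlow α (1/2 + (⌈M⌉₊ : ℝ)))
          + min |(0:ℝ) - (1/2 + (⌈M⌉₊ : ℝ))| M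
        rw [min_eq_right hMt]
        linarith
      have hiso2 := hiso (FH 0) (FH (1/2 + (⌈M⌉₊ : ℝ)))
      rw [hw, hw'] at hiso2
      have h3 : dist w w' = zdist R M (FH 0).1 (FH (1/2 + (⌈M⌉₊ : ℝ))).1 := hiso2
      have h4 := T2_dist_le_half w w'
      rw [h3] at h4
      linarith
  have hYL : ∀ (y : T2) (hy : y.2 = 0), ∃ w:T2, w.2 = 0 ∧ (φ (Yp y hy)).1 = Sum.inl w := by
    intro y hy
    obtain ⟨u, hu⟩ := Quotient.exists_rep y.1
    have hu' : (u : AddCircle (1:ℝ)) = y.1 := hu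
    have hyz : Yp y hy = FY u := Subtype.ext (by
      show Sum.inl y = Sum.inl (((u : AddCircle (1:ℝ)), 0) : T2)
      exact congrArg Sum.inl (Prod.ext_iff.mpr ⟨hu'.symm, hy⟩))
    obtain ⟨w, hw⟩ := (Ycoh 0 u).mp hY0
    rcases (φ (FY u)).2 with ⟨w', hw2, hw'⟩ | ⟨s, hs⟩
    · exact ⟨w', hw2, by rw [hyz]; exact hw'⟩
    · exfalso
      rw [hs] at hw
      simp at hw
  have hHR : ∀ t : ℝ, ∃ s : ℝ, (φ (FH t)).1 = Sum.inr (torusFlow α s, s) := by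
    intro t
    have hnot : ¬ ∃ y:T2, (φ (FH t)).1 = Sum.inl y := by
      intro hLt
      have hHL : ∀ s, ∃ y:T2, (φ (FH s)).1 = Sum.inl y := fun s => (Hcoh t s).mp hLt
      obtain ⟨z, hz⟩ := hsurj (FH 0)
      have hzR : ¬ ∃ y:T2, (φ z).1 = Sum.inl y := by
        rw [hz]
        rintro ⟨y, hyy⟩
        simp at hyy
      rcases z.2 with ⟨y, hy, hzy⟩ | ⟨s, hzs⟩
      · obtain ⟨w, hw2, hw⟩ := hYL y hy
        have hzz : z = Yp y hy := Subtype.ext hzy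
        exact hzR ⟨w, by rw [hzz]; exact hw⟩
      · have hzz : z = FH s := Subtype.ext hzs
        exact hzR (hzz ▸ hHL s)
    rcases (φ (FH t)).2 with ⟨y, hy, hyy⟩ | ⟨s, hs⟩
    · exact absurd ⟨y, hyy⟩ hnot
    · exact ⟨s, hs⟩
  choose σ hσ using hHR
  choose ψ hψ2 hψ using hYL
  have hinj : Function.Injective φ := by
    intro p q hpq
    have h0 : zdist R M p.1 q.1 = 0 := by
      rw [← hiso p q, hpq, zdist_self hM.le]
    rcases p.2 with ⟨y, hy, hp⟩ | ⟨t, hp⟩ <;> rcases q.2 with ⟨y', hy', hq⟩ | ⟨s, hq⟩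
    · rw [hp, hq] at h0
      have h1 : dist y y' = 0 := h0
      rw [dist_eq_zero] at h1
      exact Subtype.ext (by rw [hp, hq, h1])
    · exfalso
      rw [hp, hq] at h0
      have h1 : dist y (torusFlow α s, s).1 + R = 0 := h0
      have h2 : (0:ℝ) ≤ dist y (torusFlow α s, s).1 := dist_nonneg
      linarith
    · exfalso
      rw [hp, hq] at h0
      have h1 : dist (torusFlow α t, t).1 y' + R = 0 := h0
      have h2 : (0:ℝ) ≤ dist (torusFlow α t, t).1 y' := dist_nonneg
      linarith
    · rw [hp, hq] at h0
      have h1 : dist (torusFlow α t) (torusFlow α s) + min |t - s| M = 0 := h0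
      have h2 : (0:ℝ) ≤ dist (torusFlow α t) (torusFlow α s) := dist_nonneg
      have h3 : (0:ℝ) ≤ min |t - s| M := le_min (abs_nonneg _) hM.le
      have h4 : min |t - s| M = 0 := by linarith
      have h5 : |t - s| = 0 := by
        rcases le_or_gt |t - s| M with h6 | h6
        · rwa [min_eq_left h6] at h4
        · exfalso
          rw [min_eq_right h6.le] at h4
          linarith
      have h6 : t = s := by rwa [abs_eq_zero, sub_eq_zero] at h5
      exact Subtype.ext (by rw [hp, hq, h6])
  have hdH : ∀ t s : ℝ, dist (torusFlow α (σ t)) (torusFlow α (σ s)) + min |σ t - σ s| M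
      = dist (torusFlow α t) (torusFlow α s) + min |t - s| M := by
    intro t s
    have h1 := hiso (FH t) (FH s)
    rw [hσ t, hσ s] at h1
    exact h1
  have hcross : ∀ (y:T2) (hy : y.2 = 0) (t : ℝ),
      dist (ψ y hy) (torusFlow α (σ t)) = dist y (torusFlow α t) := by
    intro y hy t
    have h1 := hiso (Yp y hy) (FH t)
    rw [hψ y hy, hσ t] at h1
    have h2 : dist (ψ y hy) (torusFlow α (σ t), σ t).1 + R
        = dist y (torusFlow α t, t).1 + R := h1
    exact add_right_cancel h2
  have hσinj : ∀ {t s : ℝ}, σ t = σ s → t = s := by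
    intro t s h
    have h1 : φ (FH t) = φ (FH s) := Subtype.ext (by rw [hσ t, hσ s, h])
    have h2 := congrArg Subtype.val (hinj h1)
    have h3 : (Sum.inr (torusFlow α t, t) : T2 ⊕ T2 × ℝ) = Sum.inr (torusFlow α s, s) := h2
    simp [Prod.ext_iff] at h3
    exact h3.2
  have hσsurj : ∀ s : ℝ, ∃ t, σ t = s := by
    intro s
    obtain ⟨z, hz⟩ := hsurj (FH s)
    rcases z.2 with ⟨y, hy, hzy⟩ | ⟨t, hzt⟩
    · exfalso
      have hzz : z = Yp y hy := Subtype.ext hzy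
      have h1 : (φ z).1 = Sum.inl (ψ y hy) := by rw [hzz]; exact hψ y hy
      rw [hz] at h1
      simp at h1
    · have hzz : z = FH t := Subtype.ext hzt
      refine ⟨t, ?_⟩
      have h1 : (φ (FH t)).1 = (FH s).1 := by rw [← hzz, hz]
      rw [hσ t] at h1
      have h2 : (Sum.inr (torusFlow α (σ t), σ t) : T2 ⊕ T2 × ℝ)
          = Sum.inr (torusFlow α s, s) := h1
      simp [Prod.ext_iff] at h2
      exact h2.2
  choose τ hτ using hσsurj
  have hτσ : ∀ t, τ (σ t) = t := fun t => hσinj (hτ (σ t))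
  have hdHτ : ∀ u v : ℝ, dist (torusFlow α (τ u)) (torusFlow α (τ v)) + min |τ u - τ v| M
      = dist (torusFlow α u) (torusFlow α v) + min |u - v| M := by
    intro u v
    have h1 := hdH (τ u) (τ v)
    rw [hτ u, hτ v] at h1
    exact h1.symm
  have hc0 : (0:ℝ) < 2*(1 + max 1 |α|) := by positivity
  have hδ0 : (0:ℝ) < (min (1/(2*(1+|α|))) M)/(2*(1 + max 1 |α|)) := by
    have : (0:ℝ) < min (1/(2*(1+|α|))) M := lt_min (by positivity) hM
    positivity
  have hlocσ : ∀ t s : ℝ, |t - s| ≤ (min (1/(2*(1+|α|))) M)/(2*(1 + max 1 |α|)) →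
      |σ t - σ s| = |t-s| := fun t s h =>
    local_of_pres α hM σ hdH ((le_div_iff₀ hc0).mp h)
  have hlocτ : ∀ t s : ℝ, |t - s| ≤ (min (1/(2*(1+|α|))) M)/(2*(1 + max 1 |α|)) →
      |τ t - τ s| = |t-s| := fun t s h =>
    local_of_pres α hM τ hdHτ ((le_div_iff₀ hc0).mp h)
  have hisoσ : ∀ t s : ℝ, |σ t - σ s| = |t - s| := by
    intro t s
    refine le_antisymm (lipschitz_of_local σ hδ0 hlocσ t s) ?_
    have h1 := lipschitz_of_local τ hδ0 hlocτ (σ t) (σ s)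
    rwa [hτσ, hτσ] at h1
  rcases real_isometry σ hisoσ with hlin | hlin
  · -- translation
    refine ⟨σ 0, Or.inl ⟨?_, ?_, ?_⟩⟩
    all_goals {
      have hψval : ∀ (y:T2) (hy : y.2 = 0), ψ y hy = torusFlow α (σ 0) + y := by
        intro y hy
        have hkey : ∀ t, dist (ψ y hy - torusFlow α (σ 0)) (torusFlow α t)
            = dist y (torusFlow α t) := by
          intro t
          have h1 := hcross y hy t
          rw [hlin t, torusFlow_add] at h1
          rw [show dist (ψ y hy) (torusFlow α t + torusFlow α (σ 0))
              = dist (ψ y hy - torusFlow α (σ 0)) (torusFlow α t) from by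
            rw [← dist_add_right (ψ y hy - torusFlow α (σ 0)) (torusFlow α t) (torusFlow α (σ 0)),
              sub_add_cancel]] at h1
          exact h1
        have h2 := torusFlow_unique hα _ _ hkey
        rw [sub_eq_iff_eq_add] at h2
        rw [h2, add_comm]
      first
      | · -- (torusFlow α (σ 0)).2 = 0
          have h0 := hψval 0 rfl
          have h2 := hψ2 0 rfl
          rw [h0, add_zero] at h2
          exact h2
      | · intro y hy
          exact (hψ y hy).trans (by rw [hψval y hy])
      | · intro t
          exact (hσ t).trans (by rw [hlin t])
    }
  · -- reflection
    refine ⟨σ 0 / 2, Or.inr ⟨?_, ?_, ?_⟩⟩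
    all_goals {
      have h2a : 2 * (σ 0 / 2) = σ 0 := by ring
      have hψval : ∀ (y:T2) (hy : y.2 = 0), ψ y hy = torusFlow α (σ 0) - y := by
        intro y hy
        have hkey : ∀ t, dist (torusFlow α (σ 0) - ψ y hy) (torusFlow α t)
            = dist y (torusFlow α t) := by
          intro t
          have h1 := hcross y hy t
          rw [hlin t, torusFlow_sub] at h1
          rw [show dist (ψ y hy) (torusFlow α (σ 0) - torusFlow α t)
              = dist (torusFlow α (σ 0) - ψ y hy) (torusFlow α t) from by
            calc dist (ψ y hy) (torusFlow α (σ 0) - torusFlow α t)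
                = dist (torusFlow α (σ 0) - ψ y hy)
                  (torusFlow α (σ 0) - (torusFlow α (σ 0) - torusFlow α t)) :=
                  (dist_sub_left _ _ _).symm
            _ = dist (torusFlow α (σ 0) - ψ y hy) (torusFlow α t) := by rw [sub_sub_cancel]] at h1
          exact h1
        have h2 := torusFlow_unique hα _ _ hkey
        rw [← sub_sub_cancel (torusFlow α (σ 0)) (ψ y hy), h2]
      first
      | · have h0 := hψval 0 rfl
          have h2 := hψ2 0 rfl
          rw [h0, sub_zero] at h2
          rw [h2a]
          exact h2
      | · intro y hy
          exact (hψ y hy).trans (by rw [hψval y hy, h2a])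
      | · intro t
          exact (hσ t).trans (by rw [hlin t, h2a])
    }

/-- every surjective isometry of the one-dimensional example
`X₁ = Y₁ ∪ H` is, for some `a ∈ ℝ`, either the restriction of the translation
`y ↦ g(a) + y`, `(g(t), t) ↦ (g(t+a), t+a)` with `g(a) ∈ Y₁`, or the restriction
of the reflection `y ↦ g(2a) - y`, `(g(t), t) ↦ (g(2a-t), 2a-t)` with
`g(2a) ∈ Y₁`; and conversely each such map is a surjective isometry of `X₁`. -/
theorem torusX1_isometry_classification (α : ℝ) (hα : Irrational α)
    (R M : ℝ) (hM : 0 < M) (hRM : M ≤ 2 * R) :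
    -- every surjective isometry of `X₁` has one of the two forms:
    (∀ φ : torusX1 α → torusX1 α, Function.Surjective φ →
      (∀ p q : torusX1 α, zdist R M (φ p).1 (φ q).1 = zdist R M p.1 q.1) →
      ∃ a : ℝ,
        ((torusFlow α a).2 = 0 ∧
          (∀ (y : T2) (hy : y.2 = 0),
            (φ ⟨Sum.inl y, memT1 α y hy⟩).1 = Sum.inl (torusFlow α a + y)) ∧
          (∀ t : ℝ, (φ ⟨Sum.inr (torusFlow α t, t), memH1 α t⟩).1 =
              Sum.inr (torusFlow α (t + a), t + a))) ∨
        ((torusFlow α (2 * a)).2 = 0 ∧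
          (∀ (y : T2) (hy : y.2 = 0),
            (φ ⟨Sum.inl y, memT1 α y hy⟩).1 = Sum.inl (torusFlow α (2 * a) - y)) ∧
          (∀ t : ℝ, (φ ⟨Sum.inr (torusFlow α t, t), memH1 α t⟩).1 =
              Sum.inr (torusFlow α (2 * a - t), 2 * a - t)))) ∧
    -- conversely, each translation with `g(a) ∈ Y₁` is a surjective isometry:
    (∀ a : ℝ, (torusFlow α a).2 = 0 →
      ∃ φ : torusX1 α → torusX1 α, Function.Surjective φ ∧
        (∀ p q : torusX1 α, zdist R M (φ p).1 (φ q).1 = zdist R M p.1 q.1) ∧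
        (∀ (y : T2) (hy : y.2 = 0),
          (φ ⟨Sum.inl y, memT1 α y hy⟩).1 = Sum.inl (torusFlow α a + y)) ∧
        (∀ t : ℝ, (φ ⟨Sum.inr (torusFlow α t, t), memH1 α t⟩).1 =
            Sum.inr (torusFlow α (t + a), t + a))) ∧
    -- and each reflection with `g(2a) ∈ Y₁` is a surjective isometry:
    (∀ a : ℝ, (torusFlow α (2 * a)).2 = 0 →
      ∃ φ : torusX1 α → torusX1 α, Function.Surjective φ ∧
        (∀ p q : torusX1 α, zdist R M (φ p).1 (φ q).1 = zdist R M p.1 q.1) ∧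
        (∀ (y : T2) (hy : y.2 = 0),
          (φ ⟨Sum.inl y, memT1 α y hy⟩).1 = Sum.inl (torusFlow α (2 * a) - y)) ∧
        (∀ t : ℝ, (φ ⟨Sum.inr (torusFlow α t, t), memH1 α t⟩).1 =
            Sum.inr (torusFlow α (2 * a - t), 2 * a - t))) := by
  refine ⟨?_, ?_, ?_⟩
  · intro φ hsurj hiso
    exact torusX1_forward α hα R M hM hRM φ hsurj hiso
  · intro a ha
    refine ⟨fun z => ⟨transMap α a z.1, transMap_mem α a ha z.2⟩, ?_, ?_, ?_, ?_⟩
    · intro w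
      have ha' : (torusFlow α (-a)).2 = 0 := by
        rw [torusFlow_neg, Prod.snd_neg, ha, neg_zero]
      exact ⟨⟨transMap α (-a) w.1, transMap_mem α (-a) ha' w.2⟩,
        Subtype.ext (transMap_inv α a w.1)⟩
    · intro p q
      exact transMap_zdist α R M a p.1 q.1
    · intro y hy
      rfl
    · intro t
      show Sum.inr (torusFlow α t + torusFlow α a, t + a)
        = Sum.inr (torusFlow α (t+a), t+a)
      rw [← torusFlow_add]
  · intro a ha
    refine ⟨fun z => ⟨reflMap α (2*a) z.1, reflMap_mem α (2*a) ha z.2⟩, ?_, ?_, ?_, ?_⟩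
    · intro w
      exact ⟨⟨reflMap α (2*a) w.1, reflMap_mem α (2*a) ha w.2⟩,
        Subtype.ext (reflMap_inv α (2*a) w.1)⟩
    · intro p q
      exact reflMap_zdist α R M (2*a) p.1 q.1
    · intro y hy
      rfl
    · intro t
      show Sum.inr (torusFlow α (2*a) - torusFlow α t, 2*a - t)
        = Sum.inr (torusFlow α (2*a-t), 2*a-t)
      rw [← torusFlow_sub]
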